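/- A diagram F : I → Inj (from a small category I to the category of sets and injections) has a cocone if and only if for the colimit of F computed in Set, all the canonical maps F(I) → colim F are injective. -/

import Mathlib

open CategoryTheory

universe u

/-- A diagram of sets and injections has a cocone in the category of sets and
injections iff all the canonical maps into its colimit computed in `Set` are
injective. -/
theorem stmt_11 {I : Type u} [SmallCategory I] (F : I ⥤ Type u)
    (hinj : ∀ {i j : I} (f : i ⟶ j), Function.Injective (F.map f)) :
    (∃ (X : Type u) (c : ∀ i : I, F.obj i → X),
        (∀ i : I, Function.Injective (c i)) ∧
        ∀ {i j : I} (f : i ⟶ j) (x : F.obj i), c j (F.map f x) = c i x) ↔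
    ∀ i : I, Function.Injective (Limits.colimit.ι F i) := by
  constructor
  · rintro ⟨X, c, hc, hnat⟩ i
    let co : Limits.Cocone F :=
      ⟨X, ⟨fun j => TypeCat.ofHom (c j), by
        intro a b f
        ext x
        exact hnat f x⟩⟩
    have key : ∀ x, Limits.colimit.desc F co (Limits.colimit.ι F i x) = c i x := by
      intro x
      exact ConcreteCategory.congr_hom (Limits.colimit.ι_desc co i) x
    intro a b h
    apply hc i
    rw [← key, ← key, h]
  · intro h
    exact ⟨Limits.colimit F, fun i => Limits.colimit.ι F i, h,
      fun {i j} f x => ConcreteCategory.congr_hom (Limits.colimit.w F f) x⟩
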